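/- Let c > 0 be a real number and define q : ℝ × ℂ × ℂ × ℂ → ℝ by q(f, z, w, λ) := f · Im(z + w) − c · Re((conj(w) + z) · conj(λ)). Then: (i) q is a quadratic form on the 7-dimensional real vector space ℝ × ℂ × ℂ × ℂ whose radical (the set of vectors at which the associated polar form vanishes identically) is exactly the 1-dimensional real span of e₀ := (0, 1, −1, 0); (ii) there is a real linear isomorphism T : ℝ⁷ → ℝ × ℂ × ℂ × ℂ such that q(T(x₁,…,x₇)) = x₁² + x₂² + x₃² − x₄² − x₅² − x₆²; in particular q has rank 6 and signature (3, 3), so the maximal dimension of a subspace on which q is negative definite is 3. -/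
import Mathlib

private lemma cmk_re (a b : ℝ) : (⟨a, b⟩ : ℂ).re = a := rfl
private lemma cmk_im (a b : ℝ) : (⟨a, b⟩ : ℂ).im = b := rfl

/-- The bilinear form whose diagonal is the model quadratic form. -/
private noncomputable def Bf (c : ℝ) : (ℝ × ℂ × ℂ × ℂ) →ₗ[ℝ] (ℝ × ℂ × ℂ × ℂ) →ₗ[ℝ] ℝ :=
  LinearMap.mk₂ ℝ
    (fun x y => x.1 * (y.2.1.im + y.2.2.1.im)
      - c * ((x.2.2.1.re + x.2.1.re) * y.2.2.2.re + (x.2.1.im - x.2.2.1.im) * y.2.2.2.im))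
    (by
      intro m m' n
      simp only [Prod.fst_add, Prod.snd_add, Complex.add_re, Complex.add_im]
      ring)
    (by
      intro a m n
      simp only [Prod.smul_fst, Prod.smul_snd, Complex.smul_re, Complex.smul_im,
        smul_eq_mul]
      ring)
    (by
      intro m n n'
      simp only [Prod.fst_add, Prod.snd_add, Complex.add_re, Complex.add_im]
      ring)
    (by
      intro a m n
      simp only [Prod.smul_fst, Prod.smul_snd, Complex.smul_re, Complex.smul_im,
        smul_eq_mul]
      ring)

private noncomputable def tFun (c : ℝ) (x : Fin 7 → ℝ) : ℝ × ℂ × ℂ × ℂ :=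
  (x 0 + x 3,
   ⟨(x 1 + x 4 + x 6) / 2, (x 0 - x 3 + x 2 + x 5) / 2⟩,
   ⟨(x 1 + x 4 - x 6) / 2, (x 0 - x 3 - x 2 - x 5) / 2⟩,
   ⟨-(x 1 - x 4) / c, -(x 2 - x 5) / c⟩)

private noncomputable def tInv (c : ℝ) (v : ℝ × ℂ × ℂ × ℂ) : Fin 7 → ℝ :=
  ![(v.1 + (v.2.1.im + v.2.2.1.im)) / 2,
    (v.2.1.re + v.2.2.1.re - c * v.2.2.2.re) / 2,
    ((v.2.1.im - v.2.2.1.im) - c * v.2.2.2.im) / 2,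
    (v.1 - (v.2.1.im + v.2.2.1.im)) / 2,
    (v.2.1.re + v.2.2.1.re + c * v.2.2.2.re) / 2,
    ((v.2.1.im - v.2.2.1.im) + c * v.2.2.2.im) / 2,
    v.2.1.re - v.2.2.1.re]

private lemma vec7_0 (a0 a1 a2 a3 a4 a5 a6 : ℝ) : ![a0,a1,a2,a3,a4,a5,a6] 0 = a0 := rfl
private lemma vec7_1 (a0 a1 a2 a3 a4 a5 a6 : ℝ) : ![a0,a1,a2,a3,a4,a5,a6] 1 = a1 := rfl
private lemma vec7_2 (a0 a1 a2 a3 a4 a5 a6 : ℝ) : ![a0,a1,a2,a3,a4,a5,a6] 2 = a2 := rfl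
private lemma vec7_3 (a0 a1 a2 a3 a4 a5 a6 : ℝ) : ![a0,a1,a2,a3,a4,a5,a6] 3 = a3 := rfl
private lemma vec7_4 (a0 a1 a2 a3 a4 a5 a6 : ℝ) : ![a0,a1,a2,a3,a4,a5,a6] 4 = a4 := rfl
private lemma vec7_5 (a0 a1 a2 a3 a4 a5 a6 : ℝ) : ![a0,a1,a2,a3,a4,a5,a6] 5 = a5 := rfl
private lemma vec7_6 (a0 a1 a2 a3 a4 a5 a6 : ℝ) : ![a0,a1,a2,a3,a4,a5,a6] 6 = a6 := rfl

private noncomputable def Tlin (c : ℝ) (hc : c ≠ 0) : (Fin 7 → ℝ) ≃ₗ[ℝ] ℝ × ℂ × ℂ × ℂ where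
  toFun := tFun c
  map_add' x y := by
    simp only [tFun, Prod.mk_add_mk, Prod.mk.injEq, Complex.ext_iff, Complex.add_re,
      Complex.add_im, Pi.add_apply, cmk_re, cmk_im]
    and_intros <;> ring
  map_smul' a x := by
    simp only [tFun, Prod.smul_mk, Prod.mk.injEq, Complex.ext_iff, Complex.smul_re,
      Complex.smul_im, Pi.smul_apply, smul_eq_mul, RingHom.id_apply, cmk_re, cmk_im]
    and_intros <;> ring
  invFun := tInv c
  left_inv x := by
    funext i
    fin_cases i <;>
      (simp [tInv, tFun, cmk_re, cmk_im, vec7_0, vec7_1, vec7_2, vec7_3, vec7_4, vec7_5, vec7_6]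
       try field_simp
       try ring_nf
       try norm_num)
  right_inv v := by
    obtain ⟨f, z, w, l⟩ := v
    simp [tInv, tFun, cmk_re, cmk_im, Prod.mk.injEq, Complex.ext_iff, vec7_0, vec7_1, vec7_2, vec7_3, vec7_4, vec7_5, vec7_6]
    and_intros <;> (try field_simp) <;> (try ring)

set_option maxHeartbeats 1000000 in
/-- The model quadratic form `q(f,z,w,λ) = f·Im(z+w) − c·Re((w̄+z)·λ̄)` (with
`c > 0`) on the 7-dimensional real vector space `ℝ × ℂ × ℂ × ℂ`:
(i) it is a quadratic form whose radical (vectors whose polar form vanishes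
identically) is exactly the real span of `e₀ = (0, 1, −1, 0)`;
(ii) in suitable real linear coordinates it is `x₁²+x₂²+x₃²−x₄²−x₅²−x₆²`,
so it has rank 6 and signature (3,3), and the maximal dimension of a
negative definite subspace is 3. -/
theorem model_resonance_form (c : ℝ) (hc : 0 < c)
    (q : ℝ × ℂ × ℂ × ℂ → ℝ)
    (hq : ∀ (f : ℝ) (z w l : ℂ),
      q (f, z, w, l) = f * (z + w).im - c * ((star w + z) * star l).re) :
    (∃ Q : QuadraticForm ℝ (ℝ × ℂ × ℂ × ℂ), ⇑Q = q) ∧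
    ({x : ℝ × ℂ × ℂ × ℂ | ∀ y, q (x + y) - q x - q y = 0}
      = (Submodule.span ℝ {(((0 : ℝ), (1 : ℂ), (-1 : ℂ), (0 : ℂ)))} :
          Submodule ℝ (ℝ × ℂ × ℂ × ℂ))) ∧
    (∃ T : (Fin 7 → ℝ) ≃ₗ[ℝ] (ℝ × ℂ × ℂ × ℂ),
      ∀ x : Fin 7 → ℝ,
        q (T x) = x 0 ^ 2 + x 1 ^ 2 + x 2 ^ 2 - x 3 ^ 2 - x 4 ^ 2 - x 5 ^ 2) ∧
    (⨆ W : {W : Submodule ℝ (ℝ × ℂ × ℂ × ℂ) // ∀ v ∈ W, v ≠ 0 → q v < 0},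
        Module.finrank ℝ W.1) = 3 := by
  have hc0 : c ≠ 0 := ne_of_gt hc
  -- the model form in real coordinates
  have hq' : ∀ v : ℝ × ℂ × ℂ × ℂ, q v =
      v.1 * (v.2.1.im + v.2.2.1.im)
        - c * ((v.2.2.1.re + v.2.1.re) * v.2.2.2.re
            + (v.2.1.im - v.2.2.1.im) * v.2.2.2.im) := by
    rintro ⟨f, z, w, l⟩
    rw [hq]
    simp only [Complex.star_def, Complex.add_im, Complex.mul_re, Complex.add_re,
      Complex.conj_re, Complex.conj_im]
    ring
  set T := Tlin c hc0 with hTdef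
  have hqT : ∀ x : Fin 7 → ℝ,
      q (T x) = x 0 ^ 2 + x 1 ^ 2 + x 2 ^ 2 - x 3 ^ 2 - x 4 ^ 2 - x 5 ^ 2 := by
    intro x
    have : (T : (Fin 7 → ℝ) → ℝ × ℂ × ℂ × ℂ) x = tFun c x := rfl
    rw [this, hq']
    simp only [tFun, cmk_re, cmk_im]
    field_simp
    ring
  refine ⟨⟨LinearMap.BilinMap.toQuadraticMap (Bf c), ?_⟩, ?_, ⟨T, hqT⟩, ?_⟩
  · funext v
    rw [LinearMap.BilinMap.toQuadraticMap_apply, hq' v]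
    simp [Bf]
  · ext x
    obtain ⟨f, z, w, l⟩ := x
    simp only [Set.mem_setOf_eq, SetLike.mem_coe]
    constructor
    · intro h
      have k1 := h (1, 0, 0, 0)
      have k2 := h (0, 0, 0, 1)
      have k3 := h (0, 0, 0, Complex.I)
      have k4 := h (0, 1, 0, 0)
      have k5 := h (0, Complex.I, 0, 0)
      have k6 := h (0, 0, Complex.I, 0)
      simp [hq', Prod.fst_add, Prod.snd_add] at k1 k2 k3 k4 k5 k6
      have e1 : z.im + w.im = 0 := by linear_combination k1
      have e2 : w.re + z.re = 0 := by
        have h2 : c * (w.re + z.re) = 0 := by linear_combination -k2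
        exact (mul_eq_zero.mp h2).resolve_left hc0
      have e3 : z.im - w.im = 0 := by
        have h3 : c * (z.im - w.im) = 0 := by linear_combination -k3
        exact (mul_eq_zero.mp h3).resolve_left hc0
      have e4 : l.re = 0 := by
        have h4 : c * l.re = 0 := by linear_combination -k4
        exact (mul_eq_zero.mp h4).resolve_left hc0
      have e5 : f - c * l.im = 0 := by linear_combination k5
      have e6 : f + c * l.im = 0 := by linear_combination k6
      have ef : f = 0 := by linarith
      have el : l.im = 0 := by
        have : c * l.im = 0 := by linarith
        exact (mul_eq_zero.mp this).resolve_left hc0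
      refine Submodule.mem_span_singleton.mpr ⟨z.re, ?_⟩
      simp only [Prod.smul_mk, smul_zero, Prod.mk.injEq, Complex.real_smul, mul_one,
        mul_neg, Complex.ext_iff, Complex.ofReal_re, Complex.ofReal_im, Complex.neg_re,
        Complex.neg_im, neg_zero, Complex.zero_re, Complex.zero_im]
      refine ⟨by linarith, ⟨trivial, by linarith⟩, ⟨by linarith, by linarith⟩,
        by linarith, by linarith⟩
    · intro hx
      obtain ⟨a, ha⟩ := Submodule.mem_span_singleton.mp hx
      simp only [Prod.smul_mk, smul_zero, Prod.mk.injEq, Complex.real_smul, mul_one,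
        mul_neg] at ha
      obtain ⟨h1, h2, h3, h4⟩ := ha
      subst h1; subst h2; subst h3; subst h4
      rintro ⟨f', z', w', l'⟩
      simp only [Prod.mk_add_mk, hq', zero_add, Complex.add_re, Complex.add_im,
        Complex.neg_re, Complex.neg_im, Complex.ofReal_re, Complex.ofReal_im,
        Complex.zero_re, Complex.zero_im]
      ring
  · -- the supremum of dimensions of negative definite subspaces is 3
    have upper : ∀ W : Submodule ℝ (ℝ × ℂ × ℂ × ℂ), (∀ v ∈ W, v ≠ 0 → q v < 0) →
        Module.finrank ℝ W ≤ 3 := by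
      intro W hW
      set φ : (Fin 7 → ℝ) →ₗ[ℝ] (Fin 3 → ℝ) := LinearMap.funLeft ℝ ℝ ![3, 4, 5] with hφdef
      have hφ : Function.Surjective φ :=
        LinearMap.funLeft_surjective_of_injective ℝ ℝ _ (by decide)
      have hK : Module.finrank ℝ (LinearMap.ker φ) = 4 := by
        have h1 := LinearMap.finrank_range_add_finrank_ker φ
        rw [LinearMap.range_eq_top.mpr hφ, finrank_top] at h1
        simp [Module.finrank_fin_fun] at h1
        omega
      set W' := W.map (T.symm : (ℝ × ℂ × ℂ × ℂ) →ₗ[ℝ] (Fin 7 → ℝ)) with hW'def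
      have hfr : Module.finrank ℝ W' = Module.finrank ℝ W :=
        LinearEquiv.finrank_map_eq T.symm W
      have hdisj : W' ⊓ LinearMap.ker φ = ⊥ := by
        rw [eq_bot_iff]
        rintro x ⟨hx1, hx2⟩
        rw [Submodule.mem_bot]
        by_contra hx0
        have hker : φ x = 0 := hx2
        have h3 : x 3 = 0 := congrFun hker 0
        have h4 : x 4 = 0 := congrFun hker 1
        have h5 : x 5 = 0 := congrFun hker 2
        have hxW : T x ∈ W := by
          have := (Submodule.mem_map_equiv (p := W) (e := T.symm)).mp hx1
          simpa using this
        have hne : T x ≠ 0 := fun hh => hx0 (by simpa using T.injective (by simpa using hh))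
        have := hW (T x) hxW hne
        rw [hqT] at this
        rw [h3, h4, h5] at this
        nlinarith [sq_nonneg (x 0), sq_nonneg (x 1), sq_nonneg (x 2)]
      have hsum := Submodule.finrank_sup_add_finrank_inf_eq W' (LinearMap.ker φ)
      rw [hdisj] at hsum
      simp only [finrank_bot, add_zero] at hsum
      have hle : Module.finrank ℝ ↥(W' ⊔ LinearMap.ker φ) ≤ 7 := by
        have := Submodule.finrank_le (W' ⊔ LinearMap.ker φ)
        simpa [Module.finrank_fin_fun] using this
      omega
    -- a 3-dimensional negative definite subspace
    set b : Fin 3 → (Fin 7 → ℝ) := fun i => Pi.single (![3, 4, 5] i) 1 with hbdef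
    have hbli : LinearIndependent ℝ b := by
      have h1 := (Pi.basisFun ℝ (Fin 7)).linearIndependent
      have h2 := h1.comp ![3, 4, 5] (by decide)
      have h3 : (⇑(Pi.basisFun ℝ (Fin 7)) ∘ ![3, 4, 5]) = b := by
        funext i
        simp [hbdef, Pi.basisFun_apply]
      rwa [h3] at h2
    set W₀' : Submodule ℝ (Fin 7 → ℝ) := Submodule.span ℝ (Set.range b) with hW₀'def
    set W₀ : Submodule ℝ (ℝ × ℂ × ℂ × ℂ) :=
      W₀'.map (T : (Fin 7 → ℝ) →ₗ[ℝ] ℝ × ℂ × ℂ × ℂ) with hW₀def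
    have hW₀rank : Module.finrank ℝ W₀ = 3 := by
      rw [hW₀def, LinearEquiv.finrank_map_eq T W₀', hW₀'def, finrank_span_eq_card hbli]
      simp
    set φ' : (Fin 7 → ℝ) →ₗ[ℝ] (Fin 4 → ℝ) := LinearMap.funLeft ℝ ℝ ![0, 1, 2, 6] with hφ'def
    have hsub : W₀' ≤ LinearMap.ker φ' := by
      rw [hW₀'def, Submodule.span_le]
      rintro _ ⟨i, rfl⟩
      rw [SetLike.mem_coe, LinearMap.mem_ker]
      funext j
      fin_cases i <;> fin_cases j <;> simp [hbdef, hφ'def, LinearMap.funLeft_apply, Pi.single_apply]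
    have hneg : ∀ v ∈ W₀, v ≠ 0 → q v < 0 := by
      intro v hv hv0
      obtain ⟨x, hxW, rfl⟩ := Submodule.mem_map.mp hv
      have hx0 : x ≠ 0 := by
        intro hh; apply hv0; rw [hh]; simp
      have hker : φ' x = 0 := hsub hxW
      have h0 : x 0 = 0 := congrFun hker 0
      have h1 : x 1 = 0 := congrFun hker 1
      have h2 : x 2 = 0 := congrFun hker 2
      have h6 : x 6 = 0 := congrFun hker 3
      have hq0 : q (T x) = x 0 ^ 2 + x 1 ^ 2 + x 2 ^ 2 - x 3 ^ 2 - x 4 ^ 2 - x 5 ^ 2 := hqT x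
      have : ((T : (Fin 7 → ℝ) →ₗ[ℝ] ℝ × ℂ × ℂ × ℂ) x) = T x := rfl
      rw [this, hq0, h0, h1, h2]
      have hkey : x 3 ≠ 0 ∨ x 4 ≠ 0 ∨ x 5 ≠ 0 := by
        by_contra hcon
        push_neg at hcon
        obtain ⟨h3, h4, h5⟩ := hcon
        apply hx0
        funext j
        fin_cases j
        · exact h0
        · exact h1
        · exact h2
        · exact h3
        · exact h4
        · exact h5
        · exact h6
      rcases hkey with hk | hk | hk <;>
        nlinarith [sq_nonneg (x 3), sq_nonneg (x 4), sq_nonneg (x 5), sq_pos_of_ne_zero hk]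
    have hbdd : BddAbove (Set.range fun W : {W : Submodule ℝ (ℝ × ℂ × ℂ × ℂ) //
        ∀ v ∈ W, v ≠ 0 → q v < 0} => Module.finrank ℝ W.1) := by
      refine ⟨3, ?_⟩
      rintro n ⟨W, rfl⟩
      exact upper W.1 W.2
    have hnonempty : Nonempty {W : Submodule ℝ (ℝ × ℂ × ℂ × ℂ) //
        ∀ v ∈ W, v ≠ 0 → q v < 0} :=
      ⟨⟨⊥, by rintro v hv hv0; rw [Submodule.mem_bot] at hv; exact absurd hv hv0⟩⟩
    refine le_antisymm ?_ ?_
    · exact ciSup_le fun W => upper W.1 W.2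
    · calc (3 : ℕ) = Module.finrank ℝ W₀ := hW₀rank.symm
        _ ≤ _ := le_ciSup hbdd ⟨W₀, hneg⟩
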